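/- arXiv:1110.1078 — 3 statements merged into one kernel-verified Lean document; each statement's English description precedes it below -/
import Mathlib

section
/- Let x ∈ ℝ^{np} be k-block-sparse with block support S = bsupp(x), let y = Ax + w with ‖A^T w‖_{b∞} ≤ κμ for some κ ∈ (0,1) and μ > 0, and let x̂ be a minimizer of (1/2)‖y − Az‖₂² + μ‖z‖_{b1} over z ∈ ℝ^{np} (the Block-Sparse LASSO). Then the error vector h = x̂ − x satisfies ‖h_{S^c}‖_{b1} ≤ ((1+κ)/(1−κ))‖h_S‖_{b1}, and consequently ‖h_S‖_{b1} ≥ ((1−κ)/2)‖h‖_{b1}. -/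
open MeasureTheory ProbabilityTheory Finset Matrix

/-- Euclidean norm of a finitely-indexed real vector. -/
noncomputable def vnorm {ι : Type*} [Fintype ι] (v : ι → ℝ) : ℝ :=
  Real.sqrt (∑ i, (v i) ^ 2)

/-- Euclidean norm of the `i`-th block of `x ∈ ℝ^{np}` (blocks indexed by `Fin p`). -/
noncomputable def bnorm {n p : ℕ} (x : Fin p × Fin n → ℝ) (i : Fin p) : ℝ :=
  vnorm (fun j => x (i, j))

/-- Block-ℓ1 norm: `‖x‖_{b1} = ∑ i, ‖x_i‖₂`. -/
noncomputable def bl1 {n p : ℕ} (x : Fin p × Fin n → ℝ) : ℝ :=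
  ∑ i, bnorm x i

/-- Block-ℓ∞ norm: `‖x‖_{b∞} = max_i ‖x_i‖₂`. -/
noncomputable def blinf {n p : ℕ} (x : Fin p × Fin n → ℝ) : ℝ :=
  ⨆ i, bnorm x i

open scoped Classical in
/-- Block support: indices of nonzero blocks. -/
noncomputable def bsupp {n p : ℕ} (x : Fin p × Fin n → ℝ) : Finset (Fin p) :=
  Finset.univ.filter (fun i => ∃ j, x (i, j) ≠ 0)

/-- `ω₂(A,s) = inf { ‖Az‖₂ / ‖z‖_{b∞} : z ≠ 0, ‖z‖_{b1} ≤ s ‖z‖_{b∞} }`. -/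
noncomputable def omega2 {m n p : ℕ} (A : Matrix (Fin m) (Fin p × Fin n) ℝ) (s : ℝ) : ℝ :=
  sInf {r | ∃ z : Fin p × Fin n → ℝ, z ≠ 0 ∧ bl1 z ≤ s * blinf z ∧
    r = vnorm (A.mulVec z) / blinf z}

/-- `ω_{b∞}(AᵀA,s) = inf { ‖AᵀAz‖_{b∞} / ‖z‖_{b∞} : z ≠ 0, ‖z‖_{b1} ≤ s ‖z‖_{b∞} }`. -/
noncomputable def omegaBInf {m n p : ℕ} (A : Matrix (Fin m) (Fin p × Fin n) ℝ) (s : ℝ) : ℝ :=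
  sInf {r | ∃ z : Fin p × Fin n → ℝ, z ≠ 0 ∧ bl1 z ≤ s * blinf z ∧
    r = blinf ((Aᵀ * A).mulVec z) / blinf z}

/-- Block ℓ1-constrained minimal singular value
`ρ_s(A) = inf { ‖Az‖₂ / ‖z‖₂ : z ≠ 0, ‖z‖_{b1}² ≤ s ‖z‖₂² }`. -/
noncomputable def rhoCMSV {m n p : ℕ} (A : Matrix (Fin m) (Fin p × Fin n) ℝ) (s : ℝ) : ℝ :=
  sInf {r | ∃ z : Fin p × Fin n → ℝ, z ≠ 0 ∧ (bl1 z) ^ 2 ≤ s * (vnorm z) ^ 2 ∧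
    r = vnorm (A.mulVec z) / vnorm z}

/-- Spectral norm (largest singular value) of a real matrix, as the ℓ2→ℓ2 operator norm. -/
noncomputable def specNorm {ι κ : Type*} [Fintype ι] [Fintype κ] (M : Matrix ι κ ℝ) : ℝ :=
  sSup {r | ∃ v : κ → ℝ, vnorm v ≤ 1 ∧ r = vnorm (M.mulVec v)}

/-- The `j`-th column block (of `n` columns) of a matrix with `np` columns. -/
def colBlock {ι : Type*} {n p : ℕ} (Q : Matrix ι (Fin p × Fin n) ℝ) (j : Fin p) :
    Matrix ι (Fin n) ℝ := Matrix.of fun r c => Q r (j, c)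

/-- The `l`-th row block (of `n` rows) of a matrix with `np` rows. -/
def rowBlock {κ : Type*} {n p : ℕ} (P : Matrix (Fin p × Fin n) κ ℝ) (l : Fin p) :
    Matrix (Fin n) κ ℝ := Matrix.of fun r c => P (l, r) c

/-- `δ_{ij} Iₙ`. -/
def deltaId (n : ℕ) {p : ℕ} (i j : Fin p) : Matrix (Fin n) (Fin n) ℝ :=
  if i = j then 1 else 0

/-- Orlicz ψ₂ norm of a scalar random variable. -/
noncomputable def psi2 {Ω : Type*} [MeasurableSpace Ω] (μ : Measure Ω) (Y : Ω → ℝ) : ℝ :=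
  sInf {t | 0 < t ∧ ∫ ω, Real.exp ((Y ω) ^ 2 / t ^ 2) ∂μ ≤ 2}

lemma vnorm_nonneg {ι : Type*} [Fintype ι] (v : ι → ℝ) : 0 ≤ vnorm v :=
  Real.sqrt_nonneg _

lemma vnorm_sq {ι : Type*} [Fintype ι] (v : ι → ℝ) : (vnorm v) ^ 2 = ∑ i, v i ^ 2 :=
  Real.sq_sqrt (Finset.sum_nonneg fun _ _ => sq_nonneg _)

lemma sum_mul_le_vnorm {ι : Type*} [Fintype ι] (u v : ι → ℝ) :
    ∑ i, u i * v i ≤ vnorm u * vnorm v := by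
  have h := Finset.sum_mul_sq_le_sq_mul_sq Finset.univ u v
  calc ∑ i, u i * v i ≤ |∑ i, u i * v i| := le_abs_self _
    _ = Real.sqrt ((∑ i, u i * v i) ^ 2) := (Real.sqrt_sq_eq_abs _).symm
    _ ≤ Real.sqrt ((∑ i, u i ^ 2) * ∑ i, v i ^ 2) := Real.sqrt_le_sqrt h
    _ = vnorm u * vnorm v := Real.sqrt_mul (Finset.sum_nonneg fun _ _ => sq_nonneg _) _

lemma vnorm_add_le {ι : Type*} [Fintype ι] (u v : ι → ℝ) :
    vnorm (fun i => u i + v i) ≤ vnorm u + vnorm v := by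
  have h1 : (vnorm (fun i => u i + v i)) ^ 2 ≤ (vnorm u + vnorm v) ^ 2 := by
    rw [vnorm_sq]
    have := sum_mul_le_vnorm u v
    have e : ∑ i, (u i + v i) ^ 2 = (∑ i, u i ^ 2) + 2 * (∑ i, u i * v i) + ∑ i, v i ^ 2 := by
      simp only [Finset.mul_sum, ← Finset.sum_add_distrib]
      exact Finset.sum_congr rfl fun i _ => by ring
    rw [e, ← vnorm_sq u, ← vnorm_sq v]; nlinarith [vnorm_nonneg u, vnorm_nonneg v]
  calc vnorm (fun i => u i + v i)
      = Real.sqrt ((vnorm (fun i => u i + v i)) ^ 2) :=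
        (Real.sqrt_sq (vnorm_nonneg _)).symm
    _ ≤ Real.sqrt ((vnorm u + vnorm v) ^ 2) := Real.sqrt_le_sqrt h1
    _ = vnorm u + vnorm v := Real.sqrt_sq (add_nonneg (vnorm_nonneg u) (vnorm_nonneg v))

lemma bnorm_nonneg {n p : ℕ} (x : Fin p × Fin n → ℝ) (i : Fin p) : 0 ≤ bnorm x i :=
  vnorm_nonneg _

/-- Proposition 1, BS-LASSO case: for the Block-Sparse LASSO, the error
`h = x̂ - x` satisfies `‖h_{Sᶜ}‖_{b1} ≤ ((1+κ)/(1-κ))‖h_S‖_{b1}` and hence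
`‖h_S‖_{b1} ≥ ((1-κ)/2)‖h‖_{b1}`. -/
theorem stmt2 {m n p k : ℕ} (A : Matrix (Fin m) (Fin p × Fin n) ℝ)
    (x : Fin p × Fin n → ℝ) (w y : Fin m → ℝ) (xhat : Fin p × Fin n → ℝ) (κ μ : ℝ)
    (hsparse : (bsupp x).card ≤ k)
    (hκ0 : 0 < κ) (hκ1 : κ < 1) (hμ : 0 < μ)
    (hy : y = A.mulVec x + w)
    (hw : blinf (Aᵀ.mulVec w) ≤ κ * μ)
    (hmin : ∀ z : Fin p × Fin n → ℝ,
      (1 / 2) * (vnorm (y - A.mulVec xhat)) ^ 2 + μ * bl1 xhat ≤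
        (1 / 2) * (vnorm (y - A.mulVec z)) ^ 2 + μ * bl1 z) :
    (∑ i ∈ (bsupp x)ᶜ, bnorm (xhat - x) i ≤
      ((1 + κ) / (1 - κ)) * ∑ i ∈ bsupp x, bnorm (xhat - x) i) ∧
    ((1 - κ) / 2) * bl1 (xhat - x) ≤ ∑ i ∈ bsupp x, bnorm (xhat - x) i := by
  classical
  set S := bsupp x with hS
  set h := xhat - x with hh
  set v := Aᵀ.mulVec w with hv
  set T := ∑ q : Fin p × Fin n, v q * h q with hT
  have hyx : y - A.mulVec x = w := by rw [hy]; abel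
  have hxh : xhat = x + h := by funext q; rw [hh]; simp
  have hres : y - A.mulVec xhat = w - A.mulVec h := by
    rw [hy, hxh, Matrix.mulVec_add]; abel
  have hwT : ∑ i, w i * (A.mulVec h) i = T := by
    rw [hT, hv]
    simp only [Matrix.mulVec, dotProduct, Matrix.transpose_apply, Finset.mul_sum,
      Finset.sum_mul]
    rw [Finset.sum_comm]
    exact Finset.sum_congr rfl fun q _ => Finset.sum_congr rfl fun i _ => by ring
  have hexp : (vnorm (w - A.mulVec h)) ^ 2
      = (vnorm w) ^ 2 - 2 * T + (vnorm (A.mulVec h)) ^ 2 := by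
    rw [vnorm_sq, vnorm_sq, vnorm_sq, ← hwT]
    simp only [Pi.sub_apply]
    have e : ∑ i, (w i - (A.mulVec h) i) ^ 2
        = ∑ i, (w i ^ 2 - 2 * (w i * (A.mulVec h) i) + (A.mulVec h) i ^ 2) :=
      Finset.sum_congr rfl fun i _ => by ring
    rw [e, Finset.sum_add_distrib, Finset.sum_sub_distrib, ← Finset.mul_sum]
  have hm := hmin x
  rw [hres, hyx] at hm
  have hineq1 : μ * bl1 xhat - μ * bl1 x ≤ T := by
    rw [hexp] at hm
    nlinarith [sq_nonneg (vnorm (A.mulVec h))]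
  have hvb : ∀ i : Fin p, bnorm v i ≤ κ * μ := fun i =>
    le_trans (le_ciSup (Set.Finite.bddAbove (Set.finite_range _)) i) hw
  have hTb : T ≤ κ * μ * bl1 h := by
    rw [hT, Fintype.sum_prod_type, bl1, Finset.mul_sum]
    apply Finset.sum_le_sum
    intro i _
    calc ∑ j, v (i, j) * h (i, j)
        ≤ vnorm (fun j => v (i, j)) * vnorm (fun j => h (i, j)) := sum_mul_le_vnorm _ _
      _ = bnorm v i * bnorm h i := rfl
      _ ≤ (κ * μ) * bnorm h i := mul_le_mul_of_nonneg_right (hvb i) (bnorm_nonneg _ _)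
  have hxSc : ∀ i ∈ Sᶜ, ∀ j, x (i, j) = 0 := by
    intro i hi j
    simp only [hS, bsupp, Finset.mem_compl, Finset.mem_filter, Finset.mem_univ,
      true_and, not_exists, not_not] at hi
    exact hi j
  have hbS : ∀ i ∈ Sᶜ, bnorm xhat i = bnorm h i := by
    intro i hi
    unfold bnorm vnorm
    congr 1
    refine Finset.sum_congr rfl fun j _ => ?_
    rw [hh]; simp [hxSc i hi j]
  have hx0 : ∀ i ∈ Sᶜ, bnorm x i = 0 := by
    intro i hi
    unfold bnorm vnorm
    rw [Finset.sum_eq_zero fun j _ => by simp [hxSc i hi j], Real.sqrt_zero]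
  have hbx : ∀ i : Fin p, bnorm x i ≤ bnorm xhat i + bnorm h i := by
    intro i
    have e1 : bnorm x i = vnorm (fun j => xhat (i, j) + -(h (i, j))) := by
      unfold bnorm; congr 1; funext j; rw [hh]; simp
    have e2 : vnorm (fun j => -(h (i, j))) = bnorm h i := by
      unfold bnorm vnorm; congr 1
      exact Finset.sum_congr rfl fun j _ => by ring
    calc bnorm x i = vnorm (fun j => xhat (i, j) + -(h (i, j))) := e1
      _ ≤ vnorm (fun j => xhat (i, j)) + vnorm (fun j => -(h (i, j))) := vnorm_add_le _ _
      _ = bnorm xhat i + bnorm h i := by rw [e2]; rfl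
  set a := ∑ i ∈ S, bnorm h i with ha
  set b := ∑ i ∈ Sᶜ, bnorm h i with hb
  have hsplit : bl1 h = a + b := (Finset.sum_add_sum_compl S _).symm
  have hblx : bl1 x = ∑ i ∈ S, bnorm x i := by
    rw [bl1, ← Finset.sum_add_sum_compl S, Finset.sum_eq_zero hx0, add_zero]
  have hblxh : bl1 xhat = ∑ i ∈ S, bnorm xhat i + b := by
    rw [bl1, ← Finset.sum_add_sum_compl S, hb]
    congr 1
    exact Finset.sum_congr rfl fun i hi => hbS i hi
  have h2 : ∑ i ∈ S, bnorm x i ≤ ∑ i ∈ S, bnorm xhat i + a := by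
    rw [ha, ← Finset.sum_add_distrib]
    exact Finset.sum_le_sum fun i _ => hbx i
  have hkey : μ * (b - a) ≤ μ * (κ * (a + b)) := by
    calc μ * (b - a) ≤ μ * (bl1 xhat - bl1 x) := by
          apply mul_le_mul_of_nonneg_left _ hμ.le
          rw [hblx, hblxh]; linarith
      _ ≤ T := by linarith [hineq1]
      _ ≤ κ * μ * bl1 h := hTb
      _ = μ * (κ * (a + b)) := by rw [hsplit]; ring
  have hba : b - a ≤ κ * (a + b) := le_of_mul_le_mul_left hkey hμ
  have hab : (1 - κ) * b ≤ (1 + κ) * a := by nlinarith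
  constructor
  · rw [div_mul_eq_mul_div, le_div_iff₀ (by linarith : (0:ℝ) < 1 - κ)]
    nlinarith
  · rw [hsplit]
    nlinarith
end

section
/- Let x ∈ ℝ^{np} be k-block-sparse, let y = Ax + w with ‖w‖₂ ≤ ε, and let x̂ be a minimizer of ‖z‖_{b1} over all z with ‖y − Az‖₂ ≤ ε (the Block-Sparse Basis Pursuit). If ω₂(A,2k) > 0, then ‖x̂ − x‖_{b∞} ≤ 2ε/ω₂(A,2k). -/
open MeasureTheory ProbabilityTheory Finset Matrix

section Aux

lemma vnorm_eq_norm {ι : Type*} [Fintype ι] (v : ι → ℝ) :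
    vnorm v = ‖(WithLp.equiv 2 (ι → ℝ)).symm v‖ := by
  rw [EuclideanSpace.norm_eq]
  simp [vnorm, Real.norm_eq_abs, sq_abs]

lemma vnorm_sub_le {ι : Type*} [Fintype ι] (a b : ι → ℝ) :
    vnorm (a - b) ≤ vnorm a + vnorm b := by
  simp only [vnorm_eq_norm]
  exact norm_sub_le _ _

lemma vnorm_pos {ι : Type*} [Fintype ι] {v : ι → ℝ} {j : ι} (h : v j ≠ 0) :
    0 < vnorm v := by
  apply Real.sqrt_pos.mpr
  exact Finset.sum_pos' (fun i _ => sq_nonneg _) ⟨j, Finset.mem_univ j, by positivity⟩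

lemma bnorm_le_blinf {n p : ℕ} (x : Fin p × Fin n → ℝ) (i : Fin p) :
    bnorm x i ≤ blinf x :=
  le_ciSup (Set.Finite.bddAbove (Set.finite_range _)) i

lemma blinf_nonneg {n p : ℕ} (x : Fin p × Fin n → ℝ) : 0 ≤ blinf x :=
  Real.iSup_nonneg (fun i => bnorm_nonneg x i)

end Aux

/-- Theorem 1, BS-BP: `‖x̂ - x‖_{b∞} ≤ 2ε / ω₂(A, 2k)`. -/
theorem stmt5 {m n p k : ℕ} (A : Matrix (Fin m) (Fin p × Fin n) ℝ)
    (x : Fin p × Fin n → ℝ) (w y : Fin m → ℝ) (xhat : Fin p × Fin n → ℝ) (ε : ℝ)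
    (hsparse : (bsupp x).card ≤ k)
    (hy : y = A.mulVec x + w)
    (hw : vnorm w ≤ ε)
    (hfeas : vnorm (y - A.mulVec xhat) ≤ ε)
    (hmin : ∀ z : Fin p × Fin n → ℝ, vnorm (y - A.mulVec z) ≤ ε → bl1 xhat ≤ bl1 z)
    (hω : 0 < omega2 A (2 * k)) :
    blinf (xhat - x) ≤ 2 * ε / omega2 A (2 * k) := by
  set h := xhat - x with hh
  by_cases hz : h = 0
  · rw [hz]
    have : blinf (0 : Fin p × Fin n → ℝ) = 0 := by
      simp [blinf, bnorm, vnorm]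
    rw [this]
    have hε : 0 ≤ ε := le_trans (vnorm_nonneg w) hw
    positivity
  -- h ≠ 0, so there is a nonzero block
  obtain ⟨⟨i0, j0⟩, hij⟩ : ∃ q, h q ≠ 0 := by
    by_contra hc
    push_neg at hc
    exact hz (funext hc)
  have hblinf_pos : 0 < blinf h :=
    lt_of_lt_of_le (vnorm_pos (v := fun j => h (i0, j)) hij) (bnorm_le_blinf h i0)
  -- x is feasible
  have hxfeas : vnorm (y - A.mulVec x) ≤ ε := by
    have : y - A.mulVec x = w := by rw [hy]; abel
    rw [this]; exact hw
  have hl1 : bl1 xhat ≤ bl1 x := hmin x hxfeas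
  -- support decomposition
  set T := bsupp x with hT
  have hoffT : ∀ i ∉ T, ∀ j, x (i, j) = 0 := by
    intro i hi j
    by_contra hne
    exact hi (Finset.mem_filter.mpr ⟨Finset.mem_univ i, ⟨j, hne⟩⟩)
  have hxhat_off : ∀ i ∉ T, bnorm xhat i = bnorm h i := by
    intro i hi
    unfold bnorm
    congr 1
    funext j
    have := hoffT i hi j
    simp [hh, Pi.sub_apply, this]
  have hx_off : ∀ i ∉ T, bnorm x i = 0 := by
    intro i hi
    unfold bnorm vnorm
    have : ∀ j, x (i, j) = 0 := hoffT i hi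
    simp [this]
  have htri : ∀ i, bnorm x i ≤ bnorm xhat i + bnorm h i := by
    intro i
    have : (fun j => x (i, j)) = (fun j => xhat (i, j)) - (fun j => h (i, j)) := by
      funext j; simp [hh]
    unfold bnorm
    rw [this]
    exact vnorm_sub_le _ _
  have hsplit : ∀ z : Fin p × Fin n → ℝ,
      bl1 z = ∑ i ∈ T, bnorm z i + ∑ i ∈ Tᶜ, bnorm z i := by
    intro z
    rw [Finset.sum_add_sum_compl]
    rfl
  -- key inequality: ∑_{Tᶜ} bnorm h ≤ ∑_T bnorm h
  have hkey : ∑ i ∈ Tᶜ, bnorm h i ≤ ∑ i ∈ T, bnorm h i := by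
    have h1 : bl1 xhat = ∑ i ∈ T, bnorm xhat i + ∑ i ∈ Tᶜ, bnorm h i := by
      rw [hsplit xhat]
      congr 1
      exact Finset.sum_congr rfl (fun i hi => hxhat_off i (Finset.mem_compl.mp hi))
    have h2 : bl1 x ≤ ∑ i ∈ T, bnorm xhat i + ∑ i ∈ T, bnorm h i := by
      rw [hsplit x]
      have : ∑ i ∈ Tᶜ, bnorm x i = 0 :=
        Finset.sum_eq_zero (fun i hi => hx_off i (Finset.mem_compl.mp hi))
      rw [this, add_zero, ← Finset.sum_add_distrib]
      exact Finset.sum_le_sum (fun i _ => htri i)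
    linarith [hl1]
  -- bl1 h ≤ 2k * blinf h
  have hcone : bl1 h ≤ (2 * (k : ℝ)) * blinf h := by
    have hTle : ∑ i ∈ T, bnorm h i ≤ (k : ℝ) * blinf h := by
      calc ∑ i ∈ T, bnorm h i ≤ ∑ _i ∈ T, blinf h :=
            Finset.sum_le_sum (fun i _ => bnorm_le_blinf h i)
        _ = (T.card : ℝ) * blinf h := by rw [Finset.sum_const, nsmul_eq_mul]
        _ ≤ (k : ℝ) * blinf h := by
            apply mul_le_mul_of_nonneg_right _ (blinf_nonneg h)
            exact_mod_cast hsparse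
    calc bl1 h = ∑ i ∈ T, bnorm h i + ∑ i ∈ Tᶜ, bnorm h i := hsplit h
      _ ≤ 2 * ∑ i ∈ T, bnorm h i := by linarith
      _ ≤ 2 * ((k : ℝ) * blinf h) := by linarith
      _ = (2 * (k : ℝ)) * blinf h := by ring
  -- omega2 ≤ ‖Ah‖/‖h‖_{b∞}
  have hmem : vnorm (A.mulVec h) / blinf h ∈
      {r | ∃ z : Fin p × Fin n → ℝ, z ≠ 0 ∧ bl1 z ≤ (2 * (k : ℝ)) * blinf z ∧
        r = vnorm (A.mulVec z) / blinf z} := ⟨h, hz, hcone, rfl⟩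
  have hbdd : BddBelow {r | ∃ z : Fin p × Fin n → ℝ, z ≠ 0 ∧
      bl1 z ≤ (2 * (k : ℝ)) * blinf z ∧ r = vnorm (A.mulVec z) / blinf z} := by
    refine ⟨0, ?_⟩
    rintro r ⟨z, _, _, rfl⟩
    exact div_nonneg (vnorm_nonneg _) (blinf_nonneg _)
  have homega_le : omega2 A (2 * k) ≤ vnorm (A.mulVec h) / blinf h :=
    csInf_le hbdd hmem
  -- ‖Ah‖ ≤ 2ε
  have hAh : vnorm (A.mulVec h) ≤ 2 * ε := by
    have heq : A.mulVec h = (y - A.mulVec x) - (y - A.mulVec xhat) := by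
      rw [hh, Matrix.mulVec_sub]
      abel
    rw [heq]
    calc vnorm ((y - A.mulVec x) - (y - A.mulVec xhat))
        ≤ vnorm (y - A.mulVec x) + vnorm (y - A.mulVec xhat) := vnorm_sub_le _ _
      _ ≤ ε + ε := add_le_add hxfeas hfeas
      _ = 2 * ε := by ring
  -- conclude
  have h1 : omega2 A (2 * k) * blinf h ≤ vnorm (A.mulVec h) := by
    have := mul_le_mul_of_nonneg_right homega_le hblinf_pos.le
    rwa [div_mul_cancel₀ _ hblinf_pos.ne'] at this
  rw [le_div_iff₀ hω]
  nlinarith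
end

section
/- Let x ∈ ℝ^{np} be k-block-sparse, let y = Ax + w with ‖A^T w‖_{b∞} ≤ κμ for some κ ∈ (0,1) and μ > 0, and let x̂ be a minimizer of (1/2)‖y − Az‖₂² + μ‖z‖_{b1} over z ∈ ℝ^{np} (the Block-Sparse LASSO). If ω_{b∞}(A^T A, 2k/(1−κ)) > 0, then ‖x̂ − x‖_{b∞} ≤ (1+κ)μ/ω_{b∞}(A^T A, 2k/(1−κ)). -/
open MeasureTheory ProbabilityTheory Finset Matrix

section BSAux

variable {ι : Type*} [Fintype ι]

lemma my_vnorm_nonneg (v : ι → ℝ) : 0 ≤ vnorm v := Real.sqrt_nonneg _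

lemma my_vnorm_sq (v : ι → ℝ) : vnorm v ^ 2 = ∑ i, v i ^ 2 :=
  Real.sq_sqrt (Finset.sum_nonneg fun _ _ => sq_nonneg _)

lemma my_vnorm_le_of_sq_le {v : ι → ℝ} {c : ℝ} (hc : 0 ≤ c) (h : vnorm v ^ 2 ≤ c ^ 2) :
    vnorm v ≤ c := by nlinarith [my_vnorm_nonneg v]

lemma my_sum_add_sq (u v : ι → ℝ) :
    ∑ i, (u i + v i) ^ 2 = (∑ i, u i ^ 2) + 2 * (∑ i, u i * v i) + ∑ i, v i ^ 2 := by
  rw [Finset.mul_sum, ← Finset.sum_add_distrib, ← Finset.sum_add_distrib]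
  exact Finset.sum_congr rfl fun i _ => by ring

lemma my_inner_le_vnorm (u v : ι → ℝ) : ∑ i, u i * v i ≤ vnorm u * vnorm v := by
  have h := Finset.sum_mul_sq_le_sq_mul_sq Finset.univ u v
  calc ∑ i, u i * v i ≤ |∑ i, u i * v i| := le_abs_self _
    _ = Real.sqrt ((∑ i, u i * v i) ^ 2) := (Real.sqrt_sq_eq_abs _).symm
    _ ≤ Real.sqrt ((∑ i, u i ^ 2) * (∑ i, v i ^ 2)) := Real.sqrt_le_sqrt h
    _ = vnorm u * vnorm v := Real.sqrt_mul (Finset.sum_nonneg fun _ _ => sq_nonneg _) _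

lemma my_vnorm_add_le (u v : ι → ℝ) : vnorm (u + v) ≤ vnorm u + vnorm v := by
  refine my_vnorm_le_of_sq_le (add_nonneg (my_vnorm_nonneg u) (my_vnorm_nonneg v)) ?_
  have h1 := my_vnorm_sq u
  have h2 := my_vnorm_sq v
  have h3 : vnorm (u + v) ^ 2 = ∑ i, (u i + v i) ^ 2 := my_vnorm_sq _
  have h4 := my_sum_add_sq u v
  have h5 := my_inner_le_vnorm u v
  nlinarith

lemma my_vnorm_neg (v : ι → ℝ) : vnorm (-v) = vnorm v := by
  unfold vnorm; simp

lemma my_vnorm_smul (t : ℝ) (v : ι → ℝ) : vnorm (t • v) = |t| * vnorm v := by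
  unfold vnorm
  simp only [Pi.smul_apply, smul_eq_mul, mul_pow, ← Finset.mul_sum]
  rw [Real.sqrt_mul (sq_nonneg t), Real.sqrt_sq_eq_abs]

lemma my_vnorm_sub_sq (u v : ι → ℝ) :
    vnorm (u - v) ^ 2 = vnorm u ^ 2 - 2 * (∑ i, u i * v i) + vnorm v ^ 2 := by
  have h : vnorm (u - v) ^ 2 = ∑ i, (u i + (-v) i) ^ 2 := by
    rw [my_vnorm_sq]; exact Finset.sum_congr rfl fun i _ => by simp [sub_eq_add_neg]
  rw [h, my_sum_add_sq, my_vnorm_sq, my_vnorm_sq]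
  have : ∑ i, u i * (-v) i = -∑ i, u i * v i := by
    rw [← Finset.sum_neg_distrib]; exact Finset.sum_congr rfl fun i _ => by simp
  rw [this]
  have : ∑ i, ((-v) i) ^ 2 = ∑ i, v i ^ 2 := Finset.sum_congr rfl fun i _ => by simp
  rw [this]; ring

variable {n p : ℕ}

lemma my_bnorm_nonneg (x : Fin p × Fin n → ℝ) (i : Fin p) : 0 ≤ bnorm x i :=
  my_vnorm_nonneg _

lemma my_bnorm_le_blinf (x : Fin p × Fin n → ℝ) (i : Fin p) : bnorm x i ≤ blinf x :=
  le_ciSup (Set.finite_range _).bddAbove i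

lemma my_blinf_nonneg (x : Fin p × Fin n → ℝ) : 0 ≤ blinf x := by
  rcases isEmpty_or_nonempty (Fin p) with hp | hp
  · unfold blinf; rw [Real.iSup_of_isEmpty]
  · exact le_trans (my_bnorm_nonneg x (Classical.arbitrary _)) (my_bnorm_le_blinf x _)

lemma my_blinf_le {x : Fin p × Fin n → ℝ} {c : ℝ} (hc : 0 ≤ c)
    (h : ∀ i, bnorm x i ≤ c) : blinf x ≤ c := by
  rcases isEmpty_or_nonempty (Fin p) with hp | hp
  · unfold blinf; rw [Real.iSup_of_isEmpty]; exact hc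
  · exact ciSup_le h

lemma my_bl1_nonneg (x : Fin p × Fin n → ℝ) : 0 ≤ bl1 x :=
  Finset.sum_nonneg fun i _ => my_bnorm_nonneg x i

lemma my_bnorm_add_le (u v : Fin p × Fin n → ℝ) (i : Fin p) :
    bnorm (u + v) i ≤ bnorm u i + bnorm v i := by
  have : (fun j => (u + v) (i, j)) = (fun j => u (i, j)) + (fun j => v (i, j)) := rfl
  unfold bnorm; rw [this]; exact my_vnorm_add_le _ _

lemma my_blinf_add_le (u v : Fin p × Fin n → ℝ) : blinf (u + v) ≤ blinf u + blinf v :=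
  my_blinf_le (add_nonneg (my_blinf_nonneg u) (my_blinf_nonneg v)) fun i =>
    le_trans (my_bnorm_add_le u v i)
      (add_le_add (my_bnorm_le_blinf u i) (my_bnorm_le_blinf v i))

lemma my_bnorm_neg (u : Fin p × Fin n → ℝ) (i : Fin p) : bnorm (-u) i = bnorm u i := by
  have : (fun j => (-u) (i, j)) = -(fun j => u (i, j)) := rfl
  unfold bnorm; rw [this, my_vnorm_neg]

lemma my_blinf_neg (u : Fin p × Fin n → ℝ) : blinf (-u) = blinf u := by
  unfold blinf; exact congrArg _ (funext fun i => my_bnorm_neg u i)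

lemma my_inner_le_blinf_bl1 (u v : Fin p × Fin n → ℝ) :
    ∑ q, u q * v q ≤ blinf u * bl1 v := by
  rw [Fintype.sum_prod_type]
  calc ∑ i, ∑ j, u (i, j) * v (i, j)
      ≤ ∑ i, blinf u * bnorm v i := by
        refine Finset.sum_le_sum fun i _ => ?_
        refine le_trans (my_inner_le_vnorm (fun j => u (i, j)) (fun j => v (i, j))) ?_
        exact mul_le_mul_of_nonneg_right (my_bnorm_le_blinf u i) (my_bnorm_nonneg v i)
    _ = blinf u * bl1 v := by rw [bl1, Finset.mul_sum]

lemma my_adjoint_sum {m : ℕ} (A : Matrix (Fin m) (Fin p × Fin n) ℝ)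
    (w : Fin m → ℝ) (h : Fin p × Fin n → ℝ) :
    ∑ r, w r * A.mulVec h r = ∑ q, Aᵀ.mulVec w q * h q := by
  simp only [Matrix.mulVec, dotProduct, Matrix.transpose_apply, Finset.mul_sum,
    Finset.sum_mul]
  rw [Finset.sum_comm]
  exact Finset.sum_congr rfl fun q _ => Finset.sum_congr rfl fun r _ => by ring

end BSAux

/-- Theorem 1, BS-LASSO: `‖x̂ - x‖_{b∞} ≤ (1+κ)μ / ω_{b∞}(AᵀA, 2k/(1-κ))`. -/
theorem stmt7 {m n p k : ℕ} (A : Matrix (Fin m) (Fin p × Fin n) ℝ)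
    (x : Fin p × Fin n → ℝ) (w y : Fin m → ℝ) (xhat : Fin p × Fin n → ℝ) (κ μ : ℝ)
    (hsparse : (bsupp x).card ≤ k)
    (hκ0 : 0 < κ) (hκ1 : κ < 1) (hμ : 0 < μ)
    (hy : y = A.mulVec x + w)
    (hw : blinf (Aᵀ.mulVec w) ≤ κ * μ)
    (hmin : ∀ z : Fin p × Fin n → ℝ,
      (1 / 2) * (vnorm (y - A.mulVec xhat)) ^ 2 + μ * bl1 xhat ≤
        (1 / 2) * (vnorm (y - A.mulVec z)) ^ 2 + μ * bl1 z)
    (hω : 0 < omegaBInf A (2 * k / (1 - κ))) :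
    blinf (xhat - x) ≤ (1 + κ) * μ / omegaBInf A (2 * k / (1 - κ)) := by
  classical
  set h := xhat - x with hh
  by_cases hh0 : h = 0
  · have hz : xhat - x = 0 := hh ▸ hh0
    have : blinf (xhat - x) = 0 := by
      rw [hz]
      refine le_antisymm (my_blinf_le le_rfl fun i => ?_) (my_blinf_nonneg _)
      have : (fun j => (0 : Fin p × Fin n → ℝ) (i, j)) = fun _ => (0 : ℝ) := rfl
      unfold bnorm vnorm; rw [this]; simp
    rw [this]
    positivity
  -- Step A : dual feasibility
  set r := y - A.mulVec xhat with hr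
  set g := Aᵀ.mulVec r with hg
  have stepA : ∀ i, bnorm g i ≤ μ := by
    intro i
    set N := bnorm g i with hN
    have hN0 : 0 ≤ N := my_bnorm_nonneg g i
    set v : Fin p × Fin n → ℝ := fun q => if q.1 = i then g (i, q.2) else 0 with hv
    set C := vnorm (A.mulVec v) ^ 2 with hC
    have hC0 : 0 ≤ C := sq_nonneg _
    have hNsq : N ^ 2 = ∑ j, g (i, j) ^ 2 := my_vnorm_sq _
    have key : ∀ t : ℝ, 0 < t → N ^ 2 ≤ t * C / 2 + μ * N := by
      intro t ht
      have hz := hmin (xhat + t • v)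
      have e1 : y - A.mulVec (xhat + t • v) = r - t • A.mulVec v := by
        rw [Matrix.mulVec_add, Matrix.mulVec_smul, hr]; abel
      have einner : ∑ r', r r' * (t • A.mulVec v) r' = t * N ^ 2 := by
        have h1 : ∑ r', r r' * (t • A.mulVec v) r' = t * ∑ r', r r' * A.mulVec v r' := by
          rw [Finset.mul_sum]; exact Finset.sum_congr rfl fun r' _ => by
            simp [Pi.smul_apply, smul_eq_mul]; ring
        rw [h1, my_adjoint_sum, ← hg]
        congr 1
        rw [Fintype.sum_prod_type, hNsq]
        rw [Finset.sum_eq_single i]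
        · exact Finset.sum_congr rfl fun j _ => by simp [hv]; ring
        · intro i' _ hi'
          refine Finset.sum_eq_zero fun j _ => by simp [hv, hi']
        · intro habs; exact absurd (Finset.mem_univ i) habs
      have e2 : vnorm (r - t • A.mulVec v) ^ 2 = vnorm r ^ 2 - 2 * (t * N ^ 2) + t ^ 2 * C := by
        rw [my_vnorm_sub_sq, einner]
        congr 1
        rw [my_vnorm_smul, mul_pow, sq_abs, hC]
      have e3 : bl1 (xhat + t • v) ≤ bl1 xhat + t * N := by
        have hadd : ∀ i', bnorm (xhat + t • v) i' ≤ bnorm xhat i' + bnorm (t • v) i' :=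
          my_bnorm_add_le xhat (t • v)
        have hb1 : bl1 (t • v) = t * N := by
          rw [bl1, Finset.sum_eq_single i]
          · have hfe : (fun j => (t • v) (i, j)) = t • (fun j => g (i, j)) := by
              funext j; simp [hv]
            unfold bnorm; rw [hfe, my_vnorm_smul, abs_of_pos ht]; rfl
          · intro i' _ hi'
            have hfe : (fun j => (t • v) (i', j)) = fun _ => (0 : ℝ) := by
              funext j; simp [hv, hi']
            unfold bnorm vnorm; rw [hfe]; simp
          · intro habs; exact absurd (Finset.mem_univ i) habs
        calc bl1 (xhat + t • v) = ∑ i', bnorm (xhat + t • v) i' := rfl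
          _ ≤ ∑ i', (bnorm xhat i' + bnorm (t • v) i') :=
              Finset.sum_le_sum fun i' _ => hadd i'
          _ = bl1 xhat + bl1 (t • v) := by
              rw [Finset.sum_add_distrib]; rfl
          _ = bl1 xhat + t * N := by rw [hb1]
      rw [e1, e2] at hz
      have e3' : μ * bl1 (xhat + t • v) ≤ μ * (bl1 xhat + t * N) :=
        mul_le_mul_of_nonneg_left e3 hμ.le
      have hz3 : t * N ^ 2 ≤ t ^ 2 * C / 2 + μ * (t * N) := by nlinarith
      have h4 : t * N ^ 2 ≤ t * (t * C / 2 + μ * N) := by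
        rw [show t * (t * C / 2 + μ * N) = t ^ 2 * C / 2 + μ * (t * N) from by ring]
        exact hz3
      exact le_of_mul_le_mul_left h4 ht
    -- deduce N² ≤ μN
    have hsq : N ^ 2 ≤ μ * N := by
      by_contra hcon
      push_neg at hcon
      set D := N ^ 2 - μ * N with hD
      have hDpos : 0 < D := by simp only [hD]; linarith
      have hC1 : (0 : ℝ) < C + 1 := by linarith
      have ht : 0 < D / (C + 1) := div_pos hDpos hC1
      have h6 : D ≤ D / (C + 1) * C / 2 := by
        have := key (D / (C + 1)) ht
        simp only [hD]
        linarith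
      have h7 : D / (C + 1) * C / 2 * (C + 1) = D * C / 2 := by
        field_simp
      have h8 : D * (C + 1) ≤ D * C / 2 := by
        have := mul_le_mul_of_nonneg_right h6 hC1.le
        rw [h7] at this
        exact this
      nlinarith [mul_nonneg hDpos.le hC0]
    by_contra hcon
    push_neg at hcon
    have hNpos : 0 < N := lt_trans hμ hcon
    nlinarith
  -- blinf bound on AᵀA h
  have hgμ : blinf g ≤ μ := my_blinf_le hμ.le stepA
  have hATA : (Aᵀ * A).mulVec h = -g + Aᵀ.mulVec w := by
    rw [← Matrix.mulVec_mulVec, hg, hr, hy, hh, ← Matrix.mulVec_neg, ← Matrix.mulVec_add]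
    congr 1
    rw [Matrix.mulVec_sub]
    abel
  have hAh : blinf ((Aᵀ * A).mulVec h) ≤ (1 + κ) * μ := by
    rw [hATA]
    calc blinf (-g + Aᵀ.mulVec w) ≤ blinf (-g) + blinf (Aᵀ.mulVec w) := my_blinf_add_le _ _
      _ ≤ μ + κ * μ := add_le_add (by rw [my_blinf_neg]; exact hgμ) hw
      _ = (1 + κ) * μ := by ring
  -- Step B : cone condition
  have hBineq : μ * (bl1 xhat - bl1 x) ≤ κ * μ * bl1 h := by
    have hz := hmin x
    have e0 : y - A.mulVec x = w := by rw [hy]; abel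
    have e1 : y - A.mulVec xhat = w - A.mulVec h := by
      rw [hy, hh, Matrix.mulVec_sub]; abel
    have e2 : vnorm (w - A.mulVec h) ^ 2 =
        vnorm w ^ 2 - 2 * (∑ r', w r' * A.mulVec h r') + vnorm (A.mulVec h) ^ 2 :=
      my_vnorm_sub_sq _ _
    have e3 : ∑ r', w r' * (A.mulVec h) r' ≤ κ * μ * bl1 h := by
      rw [my_adjoint_sum]
      calc ∑ q, Aᵀ.mulVec w q * h q ≤ blinf (Aᵀ.mulVec w) * bl1 h :=
            my_inner_le_blinf_bl1 _ _
        _ ≤ κ * μ * bl1 h := mul_le_mul_of_nonneg_right hw (my_bl1_nonneg h)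
    have e4 : 0 ≤ vnorm (A.mulVec h) ^ 2 := sq_nonneg _
    rw [e0, hr, e1, e2] at hz
    linarith
  -- support decomposition
  set S := bsupp x with hS
  have hxout : ∀ i ∉ S, ∀ j, x (i, j) = 0 := by
    intro i hi j
    by_contra hj
    exact hi (Finset.mem_filter.2 ⟨Finset.mem_univ _, ⟨j, hj⟩⟩)
  have hbx_out : ∀ i ∉ S, bnorm x i = 0 := by
    intro i hi
    have hfe : (fun j => x (i, j)) = fun _ => (0 : ℝ) := funext fun j => hxout i hi j
    unfold bnorm vnorm; rw [hfe]; simp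
  have hbh_out : ∀ i ∉ S, bnorm xhat i = bnorm h i := by
    intro i hi
    unfold bnorm
    congr 1
    funext j
    rw [hh]
    simp [hxout i hi j]
  have hbS : ∀ i, bnorm x i - bnorm h i ≤ bnorm xhat i := by
    intro i
    have hfe : (fun j => x (i, j)) =
        (fun j => xhat (i, j)) + -(fun j => h (i, j)) := by
      funext j; simp [hh]
    have h1 : bnorm x i ≤ bnorm xhat i + bnorm h i := by
      unfold bnorm
      rw [hfe]
      refine le_trans (my_vnorm_add_le _ _) ?_
      rw [my_vnorm_neg]
    linarith
  have hsplit : ∀ z : Fin p × Fin n → ℝ,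
      bl1 z = ∑ i ∈ S, bnorm z i + ∑ i ∈ Sᶜ, bnorm z i := fun z => by
    rw [bl1, ← Finset.sum_add_sum_compl S]
  set a := ∑ i ∈ S, bnorm h i with ha
  set b := ∑ i ∈ Sᶜ, bnorm h i with hb2
  have ha0 : 0 ≤ a := Finset.sum_nonneg fun i _ => my_bnorm_nonneg h i
  have hb0 : 0 ≤ b := Finset.sum_nonneg fun i _ => my_bnorm_nonneg h i
  have hblx : bl1 x = ∑ i ∈ S, bnorm x i := by
    rw [hsplit x]
    have : ∑ i ∈ Sᶜ, bnorm x i = 0 :=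
      Finset.sum_eq_zero fun i hi => hbx_out i (Finset.mem_compl.1 hi)
    linarith
  have hbl1hat : (∑ i ∈ S, bnorm x i) - a + b ≤ bl1 xhat := by
    rw [hsplit xhat]
    have h1 : ∑ i ∈ S, (bnorm x i - bnorm h i) ≤ ∑ i ∈ S, bnorm xhat i :=
      Finset.sum_le_sum fun i _ => hbS i
    have h2 : ∑ i ∈ Sᶜ, bnorm xhat i = b :=
      Finset.sum_congr rfl fun i hi => hbh_out i (Finset.mem_compl.1 hi)
    rw [Finset.sum_sub_distrib] at h1
    linarith
  have hbl1h : bl1 h = a + b := hsplit h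
  have hcone : (1 - κ) * b ≤ (1 + κ) * a := by
    have h1 : μ * ((b - a)) ≤ κ * μ * (a + b) := by
      have hge : bl1 xhat - bl1 x ≥ b - a := by
        rw [hblx]; linarith
      have h0 : μ * (b - a) ≤ μ * (bl1 xhat - bl1 x) := mul_le_mul_of_nonneg_left hge hμ.le
      rw [hbl1h] at hBineq
      linarith
    have h2 : b - a ≤ κ * (a + b) := by
      have h3 : μ * (b - a) ≤ μ * (κ * (a + b)) := by
        rw [show μ * (κ * (a + b)) = κ * μ * (a + b) from by ring]
        exact h1
      exact le_of_mul_le_mul_left h3 hμ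
    linarith
  have hbinf0 : 0 ≤ blinf h := my_blinf_nonneg h
  have hak : a ≤ (k : ℝ) * blinf h := by
    calc a ≤ ∑ _i ∈ S, blinf h := Finset.sum_le_sum fun i _ => my_bnorm_le_blinf h i
      _ = (S.card : ℝ) * blinf h := by rw [Finset.sum_const, nsmul_eq_mul]
      _ ≤ (k : ℝ) * blinf h := by
          exact mul_le_mul_of_nonneg_right (Nat.cast_le.2 hsparse) hbinf0
  have h1κ : 0 < 1 - κ := by linarith
  have hconef : bl1 h ≤ (2 * (k : ℝ) / (1 - κ)) * blinf h := by
    rw [div_mul_eq_mul_div, le_div_iff₀ h1κ, hbl1h]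
    linarith [hcone, hak]
  -- positivity of blinf h
  have hblinfpos : 0 < blinf h := by
    obtain ⟨q, hq⟩ : ∃ q, h q ≠ 0 := by
      by_contra hcon
      push_neg at hcon
      exact hh0 (funext hcon)
    have hq' : h (q.1, q.2) ≠ 0 := by rw [Prod.mk.eta]; exact hq
    have hpos : 0 < bnorm h q.1 := by
      refine Real.sqrt_pos.2 ?_
      have h1 : (h (q.1, q.2)) ^ 2 ≤ ∑ j, (h (q.1, j)) ^ 2 :=
        Finset.single_le_sum (f := fun j => (h (q.1, j)) ^ 2)
          (fun j _ => sq_nonneg _) (Finset.mem_univ q.2)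
      have h2 : 0 < |h (q.1, q.2)| := abs_pos.2 hq'
      have h3 : 0 < (h (q.1, q.2)) ^ 2 := by
        rw [← sq_abs]; exact pow_pos h2 2
      linarith
    exact lt_of_lt_of_le hpos (my_bnorm_le_blinf h q.1)
  -- conclude via the infimum
  have hbdd : BddBelow {r | ∃ z : Fin p × Fin n → ℝ, z ≠ 0 ∧
      bl1 z ≤ (2 * (k : ℝ) / (1 - κ)) * blinf z ∧
      r = blinf ((Aᵀ * A).mulVec z) / blinf z} := by
    refine ⟨0, fun r hr => ?_⟩
    obtain ⟨z, _, _, hrz⟩ := hr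
    rw [hrz]
    exact div_nonneg (my_blinf_nonneg _) (my_blinf_nonneg _)
  have hmem : blinf ((Aᵀ * A).mulVec h) / blinf h ∈ {r | ∃ z : Fin p × Fin n → ℝ, z ≠ 0 ∧
      bl1 z ≤ (2 * (k : ℝ) / (1 - κ)) * blinf z ∧
      r = blinf ((Aᵀ * A).mulVec z) / blinf z} := ⟨h, hh0, hconef, rfl⟩
  have hle : omegaBInf A (2 * (k : ℝ) / (1 - κ)) ≤ blinf ((Aᵀ * A).mulVec h) / blinf h := by
    exact csInf_le hbdd hmem
  have hfin : omegaBInf A (2 * (k : ℝ) / (1 - κ)) * blinf h ≤ (1 + κ) * μ := by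
    have := (le_div_iff₀ hblinfpos).1 hle
    exact le_trans this hAh
  rw [le_div_iff₀ hω]
  linarith [hfin]
end
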